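/- Let a, b : [0,∞) → (0,∞) be decreasing functions with lim_{t→∞} a(t) = lim_{t→∞} b(t) = 0. Suppose there exists γ ∈ (0,1) such that t ↦ t^γ · b(t) is increasing, and suppose there exist constants B, C > 0 such that for every θ > 0, ∑_{n≥1} max(a(n) − θ, 0) ≤ C ∫_0^∞ max(B·b(t) − θ, 0) dt. Then there exists a constant K > 0 such that a(n) ≤ K · b(n) for all integers n ≥ 1. -/
import Mathlib


open MeasureTheory Filter
open scoped ENNReal

/-- Lemma 2.9(1): from a convex-function (Abel-type) majorization of the sums of
`(a(n) - θ)⁺` by integrals of `(B·b(t) - θ)⁺`, deduce `a(n) ≲ b(n)`. -/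
theorem stmt_0 (a b : ℝ → ℝ) (γ B C : ℝ)
    (ha_pos : ∀ t : ℝ, 0 ≤ t → 0 < a t) (hb_pos : ∀ t : ℝ, 0 ≤ t → 0 < b t)
    (ha_anti : AntitoneOn a (Set.Ici 0)) (hb_anti : AntitoneOn b (Set.Ici 0))
    (ha_lim : Tendsto a atTop (nhds 0)) (hb_lim : Tendsto b atTop (nhds 0))
    (hγ : 0 < γ) (hγ1 : γ < 1)
    (hmono : MonotoneOn (fun t : ℝ => t ^ γ * b t) (Set.Ici 0))
    (hB : 0 < B) (hC : 0 < C)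
    (hyp : ∀ θ : ℝ, 0 < θ →
      ∑' n : ℕ, ENNReal.ofReal (max (a ((n : ℝ) + 1) - θ) 0) ≤
        ENNReal.ofReal C *
          ∫⁻ t in Set.Ioi (0 : ℝ), ENNReal.ofReal (max (B * b t - θ) 0)) :
    ∃ K : ℝ, 0 < K ∧ ∀ n : ℕ, 1 ≤ n → a n ≤ K * b n := by
  have hγ1' : 0 < 1 - γ := by linarith
  set c : ℝ := min 1 ((1 - γ) / (2 * C)) with hc_def
  have hc_pos : 0 < c := lt_min one_pos (by positivity)
  have hc1 : c ≤ 1 := min_le_left _ _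
  have hc2 : c ≤ (1 - γ) / (2 * C) := min_le_right _ _
  have key : ∀ n : ℕ, 1 ≤ n → a n ≤ 2 * B * b (c * n) := by
    intro n hn
    by_contra hcon
    push_neg at hcon
    have hn0 : (0 : ℝ) < n := by
      have : (1 : ℝ) ≤ n := by exact_mod_cast hn
      linarith
    set T : ℝ := c * n with hTdef
    have hT_pos : 0 < T := mul_pos hc_pos hn0
    set θ : ℝ := B * b T with hθdef
    have hθ_pos : 0 < θ := mul_pos hB (hb_pos T hT_pos.le)
    have hcon' : 2 * θ < a n := by rw [hθdef]; linarith [hcon]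
    -- Step A : lower bound for the sum
    have hA : (n : ℝ≥0∞) * ENNReal.ofReal (a n - θ) ≤
        ∑' k : ℕ, ENNReal.ofReal (max (a ((k : ℝ) + 1) - θ) 0) := by
      calc (n : ℝ≥0∞) * ENNReal.ofReal (a n - θ)
          = ∑ _k ∈ Finset.range n, ENNReal.ofReal (a n - θ) := by
            simp [Finset.sum_const, nsmul_eq_mul]
        _ ≤ ∑ k ∈ Finset.range n, ENNReal.ofReal (max (a ((k : ℝ) + 1) - θ) 0) := by
            refine Finset.sum_le_sum fun k hk => ?_
            refine ENNReal.ofReal_le_ofReal (le_max_of_le_left ?_)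
            have hk' : (k : ℝ) + 1 ≤ (n : ℝ) := by
              exact_mod_cast Nat.succ_le_of_lt (Finset.mem_range.mp hk)
            have := ha_anti (Set.mem_Ici.mpr (by positivity)) (Set.mem_Ici.mpr hn0.le) hk'
            linarith
        _ ≤ _ := ENNReal.sum_le_tsum _
    -- Step B : upper bound for the integral
    have hBint : (∫⁻ t in Set.Ioi (0 : ℝ), ENNReal.ofReal (max (B * b t - θ) 0)) ≤
        ENNReal.ofReal (θ * T ^ γ) * ∫⁻ t in Set.Ioc (0 : ℝ) T, ENNReal.ofReal (t ^ (-γ)) := by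
      have hmeasg : Measurable fun t : ℝ =>
          (Set.Ioc (0 : ℝ) T).indicator
            (fun t => ENNReal.ofReal (θ * T ^ γ) * ENNReal.ofReal (t ^ (-γ))) t := by
        refine Measurable.indicator ?_ measurableSet_Ioc
        fun_prop
      have h1 : ∀ t ∈ Set.Ioi (0 : ℝ), ENNReal.ofReal (max (B * b t - θ) 0) ≤
          (Set.Ioc (0 : ℝ) T).indicator
            (fun t => ENNReal.ofReal (θ * T ^ γ) * ENNReal.ofReal (t ^ (-γ))) t := by
        intro t ht
        have htpos : (0 : ℝ) < t := ht
        rcases le_or_gt t T with h | h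
        · rw [Set.indicator_of_mem (show t ∈ Set.Ioc (0:ℝ) T from ⟨htpos, h⟩),
            ← ENNReal.ofReal_mul (by positivity)]
          refine ENNReal.ofReal_le_ofReal ?_
          have ht2 : (0 : ℝ) < t ^ γ := Real.rpow_pos_of_pos htpos γ
          have hmt : t ^ γ * b t ≤ T ^ γ * b T :=
            hmono (Set.mem_Ici.mpr htpos.le) (Set.mem_Ici.mpr hT_pos.le) h
          have h3 : B * (t ^ γ * b t) ≤ B * (T ^ γ * b T) :=
            mul_le_mul_of_nonneg_left hmt hB.le
          rw [Real.rpow_neg htpos.le]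
          refine max_le ?_ (by positivity)
          have heq : θ * T ^ γ * (t ^ γ)⁻¹ = B * (T ^ γ * b T) / t ^ γ := by
            rw [hθdef]; ring
          rw [heq, le_div_iff₀ ht2]
          nlinarith [mul_nonneg hθ_pos.le ht2.le]
        · have hbt : b t ≤ b T :=
            hb_anti (Set.mem_Ici.mpr hT_pos.le) (Set.mem_Ici.mpr htpos.le) h.le
          have hle : B * b t - θ ≤ 0 := by
            rw [hθdef]; nlinarith [hB.le]
          rw [Set.indicator_of_notMem (fun h' => absurd h'.2 h.not_ge)]
          simp [max_eq_right hle]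
      calc (∫⁻ t in Set.Ioi (0 : ℝ), ENNReal.ofReal (max (B * b t - θ) 0))
          ≤ ∫⁻ t in Set.Ioi (0 : ℝ),
              (Set.Ioc (0 : ℝ) T).indicator
                (fun t => ENNReal.ofReal (θ * T ^ γ) * ENNReal.ofReal (t ^ (-γ))) t :=
            setLIntegral_mono hmeasg h1
        _ = ∫⁻ t in Set.Ioc (0 : ℝ) T,
              ENNReal.ofReal (θ * T ^ γ) * ENNReal.ofReal (t ^ (-γ)) := by
            rw [setLIntegral_indicator measurableSet_Ioc]
            congr 1
            rw [Set.inter_eq_left.mpr (fun x hx => hx.1)]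
        _ = ENNReal.ofReal (θ * T ^ γ) * ∫⁻ t in Set.Ioc (0 : ℝ) T, ENNReal.ofReal (t ^ (-γ)) :=
            lintegral_const_mul' _ _ ENNReal.ofReal_ne_top
    -- Step C : compute the rpow integral
    have hInt : IntegrableOn (fun t : ℝ => t ^ (-γ)) (Set.Ioc 0 T) volume := by
      have h := intervalIntegral.intervalIntegrable_rpow' (a := 0) (b := T)
        (by linarith : (-1 : ℝ) < -γ)
      rwa [intervalIntegrable_iff, Set.uIoc_of_le hT_pos.le] at h
    have hJ : (∫⁻ t in Set.Ioc (0 : ℝ) T, ENNReal.ofReal (t ^ (-γ)))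
        = ENNReal.ofReal (T ^ (1 - γ) / (1 - γ)) := by
      rw [← ofReal_integral_eq_lintegral_ofReal hInt ?_]
      · congr 1
        rw [← intervalIntegral.integral_of_le hT_pos.le,
          integral_rpow (Or.inl (by linarith : (-1 : ℝ) < -γ)),
          show -γ + 1 = 1 - γ from by ring,
          Real.zero_rpow (by linarith : (1 : ℝ) - γ ≠ 0)]
        ring
      · filter_upwards [ae_restrict_mem measurableSet_Ioc] with t ht
        exact Real.rpow_nonneg ht.1.le _
    -- Step D : combine
    have final : (n : ℝ≥0∞) * ENNReal.ofReal (a n - θ) ≤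
        ENNReal.ofReal C * (ENNReal.ofReal (θ * T ^ γ) * ENNReal.ofReal (T ^ (1 - γ) / (1 - γ))) := by
      refine hA.trans ((hyp θ hθ_pos).trans ?_)
      rw [← hJ]
      exact mul_le_mul_right hBint _
    have hreal : (n : ℝ) * (a n - θ) ≤ C * (θ * T ^ γ * (T ^ (1 - γ) / (1 - γ))) := by
      have h0 : (0 : ℝ) ≤ C * (θ * T ^ γ * (T ^ (1 - γ) / (1 - γ))) := by positivity
      refine (ENNReal.ofReal_le_ofReal_iff h0).mp ?_
      calc ENNReal.ofReal ((n : ℝ) * (a n - θ))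
          = (n : ℝ≥0∞) * ENNReal.ofReal (a n - θ) := by
            rw [ENNReal.ofReal_mul (Nat.cast_nonneg n), ENNReal.ofReal_natCast]
        _ ≤ _ := final
        _ = ENNReal.ofReal (C * (θ * T ^ γ * (T ^ (1 - γ) / (1 - γ)))) := by
            rw [← ENNReal.ofReal_mul (by positivity : (0:ℝ) ≤ θ * T ^ γ),
              ← ENNReal.ofReal_mul hC.le]
    have hTpow : T ^ γ * T ^ (1 - γ) = T := by
      rw [← Real.rpow_add hT_pos]; norm_num
    have hreal2 : (n : ℝ) * (a n - θ) ≤ C * θ * T / (1 - γ) := by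
      calc (n : ℝ) * (a n - θ) ≤ C * (θ * T ^ γ * (T ^ (1 - γ) / (1 - γ))) := hreal
        _ = C * θ * (T ^ γ * T ^ (1 - γ)) / (1 - γ) := by ring
        _ = C * θ * T / (1 - γ) := by rw [hTpow]
    have hTle : 2 * C * T ≤ (1 - γ) * n := by
      have := mul_le_mul_of_nonneg_right hc2 hn0.le
      calc 2 * C * T = 2 * C * (c * n) := by rw [hTdef]
        _ ≤ 2 * C * ((1 - γ) / (2 * C) * n) := by nlinarith [hC.le]
        _ = (1 - γ) * n := by field_simp
    have hhalf : C * θ * T / (1 - γ) ≤ (n : ℝ) * θ / 2 := by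
      rw [div_le_div_iff₀ hγ1' (by norm_num : (0 : ℝ) < 2)]
      nlinarith [mul_le_mul_of_nonneg_right hTle hθ_pos.le]
    nlinarith [mul_pos hn0 (show (0 : ℝ) < a n - 3 * θ / 2 by linarith)]
  -- conclude
  have hcγ : (0 : ℝ) < c ^ γ := Real.rpow_pos_of_pos hc_pos γ
  refine ⟨2 * B / c ^ γ, by positivity, fun n hn => ?_⟩
  have hn0 : (0 : ℝ) < n := by
    have : (1 : ℝ) ≤ n := by exact_mod_cast hn
    linarith
  have h1 := key n hn
  have hcn : c * n ≤ (n : ℝ) := by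
    calc c * (n : ℝ) ≤ 1 * n := mul_le_mul_of_nonneg_right hc1 hn0.le
      _ = n := one_mul _
  have h2 : (c * n) ^ γ * b (c * n) ≤ (n : ℝ) ^ γ * b n :=
    hmono (Set.mem_Ici.mpr (by positivity)) (Set.mem_Ici.mpr hn0.le) hcn
  have hnγ : (0 : ℝ) < (n : ℝ) ^ γ := Real.rpow_pos_of_pos hn0 γ
  have hmul : (c * n) ^ γ = c ^ γ * (n : ℝ) ^ γ := Real.mul_rpow hc_pos.le hn0.le
  have hb_cn : b (c * n) ≤ b n / c ^ γ := by
    rw [le_div_iff₀ hcγ]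
    rw [hmul] at h2
    nlinarith [h2, hnγ]
  calc a n ≤ 2 * B * b (c * n) := h1
    _ ≤ 2 * B * (b n / c ^ γ) := mul_le_mul_of_nonneg_left hb_cn (by positivity)
    _ = 2 * B / c ^ γ * b n := by ring
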